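/- arXiv:2005.07166 — 2 statements merged into one kernel-verified Lean document; each statement's English description precedes it below -/
import Mathlib

section
/- Positivity of the first-order well-balanced DG scheme with the modified Lax–Friedrichs flux (Theorem B.1): let Ū_{j−1}, Ū_j = (ρ̄_j, m̄_j, Ē_j), Ū_{j+1} ∈ G, let ρ̄^e_{j−1}, ρ̄^e_j, ρ̄^e_{j+1} > 0, let ρ^{e,max}_{j−1/2} ≥ max{ρ̄^e_{j−1}, ρ̄^e_j} and ρ^{e,max}_{j+1/2} ≥ max{ρ̄^e_j, ρ̄^e_{j+1}}, set the viscosity parameters α^{LF}_{j−1/2} = max{α_max(Ū_{j−1}), α_max(Ū_j)} and α^{LF}_{j+1/2} = max{α_max(Ū_j), α_max(Ū_{j+1})}, and let p^{e,⋆}_{j−1/2}, p^{e,⋆}_{j+1/2} ∈ ℝ. Define the modified Lax–Friedrichs fluxes F̂_{j+1/2} = ½[F(Ū_j) + F(Ū_{j+1}) − α^{LF}_{j+1/2} ρ^{e,max}_{j+1/2} (Ū_{j+1}/ρ̄^e_{j+1} − Ū_j/ρ̄^e_j)] and F̂_{j−1/2} = ½[F(Ū_{j−1}) + F(Ū_j)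 − α^{LF}_{j−1/2} ρ^{e,max}_{j−1/2} (Ū_j/ρ̄^e_j − Ū_{j−1}/ρ̄^e_{j−1})], the discretized source S̄_j = ((p^{e,⋆}_{j+1/2} − p^{e,⋆}_{j−1/2})/(h ρ̄^e_j)) · (0, ρ̄_j, m̄_j), the specific internal energy ē_j = (Ē_j − m̄_j²/(2ρ̄_j))/ρ̄_j, and α̂_j = (α^{LF}_{j−1/2} ρ^{e,max}_{j−1/2} + α^{LF}_{j+1/2} ρ^{e,max}_{j+1/2})/(2ρ̄^e_j) + |p^{e,⋆}_{j+1/2} − p^{e,⋆}_{j−1/2}|/(ρ̄^e_j √(2ē_j)). If Δt > 0 and h > 0 satisfy α̂_j Δt ≤ h, then Ū_j − (Δt/h)(F̂_{j+1/2} − F̂_{j−1/2}) + Δt·S̄_j ∈ G. -/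
/-- LF intermediate state `U - F(U)/α` admissibility, in (ρ,u,D) variables. -/
lemma lf_plus (γ ρ u D α : ℝ) (hγ : 1 < γ) (hρ : 0 < ρ) (hD : 0 < D)
    (hα : |u| + Real.sqrt (γ * ((γ - 1) * D) / ρ) ≤ α) :
    0 < ρ - ρ * u / α ∧
    0 ≤ (D + ρ * u ^ 2 / 2) - ((D + ρ * u ^ 2 / 2) + (γ - 1) * D) * u / α ∧
    (ρ * u - (ρ * u ^ 2 + (γ - 1) * D) / α) ^ 2
      < 2 * (ρ - ρ * u / α) *
        ((D + ρ * u ^ 2 / 2) - ((D + ρ * u ^ 2 / 2) + (γ - 1) * D) * u / α) := by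
  have hγ0 : (0:ℝ) < γ - 1 := by linarith
  set c := Real.sqrt (γ * ((γ - 1) * D) / ρ) with hc
  have harg : 0 < γ * ((γ - 1) * D) / ρ := by positivity
  have hcpos : 0 < c := Real.sqrt_pos.2 harg
  have hc2 : c ^ 2 = γ * ((γ - 1) * D) / ρ := Real.sq_sqrt harg.le
  have hαpos : 0 < α := lt_of_lt_of_le (by positivity) hα
  have hαu : u < α := by
    have := le_abs_self u
    linarith
  have h1 : 0 < ρ - ρ * u / α := by
    have e : ρ - ρ * u / α = ρ * (α - u) / α := by field_simp
    rw [e]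
    exact div_pos (mul_pos hρ (by linarith)) hαpos
  have hcu : c ≤ α - u := by
    have := le_abs_self u; linarith
  have hkey : ((γ - 1) * D) ^ 2 < 2 * (α - u) ^ 2 * ρ * D := by
    have h2 : c ^ 2 ≤ (α - u) ^ 2 := by
      have := pow_le_pow_left₀ hcpos.le hcu 2
      linarith
    have h3 : c ^ 2 * ρ = γ * ((γ - 1) * D) := by
      rw [hc2, div_mul_cancel₀ _ hρ.ne']
    nlinarith [mul_pos hD hD, mul_pos hρ hD]
  have hid : 2 * (ρ - ρ * u / α) *
        ((D + ρ * u ^ 2 / 2) - ((D + ρ * u ^ 2 / 2) + (γ - 1) * D) * u / α)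
      - (ρ * u - (ρ * u ^ 2 + (γ - 1) * D) / α) ^ 2
      = (2 * (α - u) ^ 2 * ρ * D - ((γ - 1) * D) ^ 2) / α ^ 2 := by
    field_simp
    ring
  have h3 : (ρ * u - (ρ * u ^ 2 + (γ - 1) * D) / α) ^ 2
      < 2 * (ρ - ρ * u / α) *
        ((D + ρ * u ^ 2 / 2) - ((D + ρ * u ^ 2 / 2) + (γ - 1) * D) * u / α) := by
    have hpos : 0 < (2 * (α - u) ^ 2 * ρ * D - ((γ - 1) * D) ^ 2) / α ^ 2 := by
      apply div_pos (by linarith) (by positivity)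
    linarith
  refine ⟨h1, ?_, h3⟩
  nlinarith [sq_nonneg (ρ * u - (ρ * u ^ 2 + (γ - 1) * D) / α)]

/-- LF intermediate state `U + F(U)/α` admissibility. -/
lemma lf_minus (γ ρ u D α : ℝ) (hγ : 1 < γ) (hρ : 0 < ρ) (hD : 0 < D)
    (hα : |u| + Real.sqrt (γ * ((γ - 1) * D) / ρ) ≤ α) :
    0 < ρ + ρ * u / α ∧
    0 ≤ (D + ρ * u ^ 2 / 2) + ((D + ρ * u ^ 2 / 2) + (γ - 1) * D) * u / α ∧
    (ρ * u + (ρ * u ^ 2 + (γ - 1) * D) / α) ^ 2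
      < 2 * (ρ + ρ * u / α) *
        ((D + ρ * u ^ 2 / 2) + ((D + ρ * u ^ 2 / 2) + (γ - 1) * D) * u / α) := by
  have hα' : |(-u)| + Real.sqrt (γ * ((γ - 1) * D) / ρ) ≤ α := by rwa [abs_neg]
  obtain ⟨h1, h2, h3⟩ := lf_plus γ ρ (-u) D α hγ hρ hD hα'
  have e0 : ρ - ρ * -u / α = ρ + ρ * u / α := by ring
  refine ⟨e0 ▸ h1, ?_, ?_⟩
  · have e : (D + ρ * (-u) ^ 2 / 2) - ((D + ρ * (-u) ^ 2 / 2) + (γ - 1) * D) * (-u) / α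
        = (D + ρ * u ^ 2 / 2) + ((D + ρ * u ^ 2 / 2) + (γ - 1) * D) * u / α := by ring
    linarith [e ▸ h2]
  · have e1 : (ρ * (-u) - (ρ * (-u) ^ 2 + (γ - 1) * D) / α) ^ 2
        = (ρ * u + (ρ * u ^ 2 + (γ - 1) * D) / α) ^ 2 := by ring
    have e2 : 2 * (ρ - ρ * (-u) / α) *
          ((D + ρ * (-u) ^ 2 / 2) - ((D + ρ * (-u) ^ 2 / 2) + (γ - 1) * D) * (-u) / α)
        = 2 * (ρ + ρ * u / α) *
          ((D + ρ * u ^ 2 / 2) + ((D + ρ * u ^ 2 / 2) + (γ - 1) * D) * u / α) := by ring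
    calc (ρ * u + (ρ * u ^ 2 + (γ - 1) * D) / α) ^ 2 = _ := e1.symm
      _ < _ := h3
      _ = _ := e2

/-- Combining two strictly admissible pieces and one weakly admissible piece. -/
lemma combine3 (a1 a2 a3 b1 b2 b3 c1 c2 c3 : ℝ)
    (ha1 : 0 < a1) (ha : a2 ^ 2 < 2 * a1 * a3)
    (hb1 : 0 < b1) (hb : b2 ^ 2 < 2 * b1 * b3)
    (hc1 : 0 ≤ c1) (hc3 : 0 ≤ c3) (hc : c2 ^ 2 ≤ 2 * c1 * c3) :
    0 < a1 + b1 + c1 ∧ (a2 + b2 + c2) ^ 2 < 2 * ((a1 + b1 + c1)) * (a3 + b3 + c3) := by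
  have ha3 : 0 < a3 := by nlinarith [sq_nonneg a2]
  have hb3 : 0 < b3 := by nlinarith [sq_nonneg b2]
  refine ⟨by linarith, ?_⟩
  -- first combine a and b
  have hab : (a2 + b2) ^ 2 < 2 * (a1 + b1) * (a3 + b3) := by
    have h4 : a2 ^ 2 * b2 ^ 2 ≤ (2 * a1 * a3) * (2 * b1 * b3) :=
      mul_le_mul ha.le hb.le (sq_nonneg _) (by positivity)
    have hx : 0 ≤ a1 * b3 + a3 * b1 := by positivity
    have hx2 : (a2 * b2) ^ 2 ≤ (a1 * b3 + a3 * b1) ^ 2 := by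
      nlinarith [sq_nonneg (a1 * b3 - a3 * b1)]
    have h5 : a2 * b2 ≤ a1 * b3 + a3 * b1 := by nlinarith [hx, hx2]
    nlinarith
  have hab1 : 0 < a1 + b1 := by linarith
  have hab3 : 0 < a3 + b3 := by linarith
  have h4 : (a2 + b2) ^ 2 * c2 ^ 2 ≤ (2 * (a1 + b1) * (a3 + b3)) * (2 * c1 * c3) :=
    mul_le_mul hab.le hc (sq_nonneg _) (by positivity)
  have hx : 0 ≤ (a1 + b1) * c3 + (a3 + b3) * c1 := by positivity
  have hx2 : ((a2 + b2) * c2) ^ 2 ≤ ((a1 + b1) * c3 + (a3 + b3) * c1) ^ 2 := by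
    nlinarith [sq_nonneg ((a1 + b1) * c3 - (a3 + b3) * c1)]
  have h5 : (a2 + b2) * c2 ≤ (a1 + b1) * c3 + (a3 + b3) * c1 := by nlinarith [hx, hx2]
  nlinarith

/-- The source/remainder piece is weakly admissible. -/
lemma src_nn (ρ m E κ β S : ℝ) (hρ : 0 < ρ) (hD : 0 < E - m ^ 2 / (2 * ρ))
    (hS2 : S ^ 2 = 2 * ((E - m ^ 2 / (2 * ρ)) / ρ)) (hS : 0 < S) (hβ : |β| ≤ κ * S) :
    0 ≤ κ * ρ ∧ 0 ≤ κ * E + β * m ∧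
      (κ * m + β * ρ) ^ 2 ≤ 2 * (κ * ρ) * (κ * E + β * m) := by
  have hκ : 0 ≤ κ := by nlinarith [abs_nonneg β]
  have hβ2 : β ^ 2 ≤ κ ^ 2 * S ^ 2 := by nlinarith [abs_nonneg β, sq_abs β]
  have hm := abs_nonneg m
  have hmm := sq_abs m
  have hS2' : S ^ 2 * ρ ^ 2 = 2 * ρ * E - m ^ 2 := by
    rw [hS2]; field_simp
  have hEm : S * |m| ≤ E := by
    nlinarith [sq_nonneg (S * ρ - |m|)]
  have h1 : -(κ * (S * |m|)) ≤ β * m := by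
    have ha : |β * m| ≤ κ * S * |m| := by
      rw [abs_mul]
      exact mul_le_mul_of_nonneg_right hβ hm
    nlinarith [neg_abs_le (β * m)]
  have h2 : 0 ≤ κ * E + β * m := by
    nlinarith [mul_le_mul_of_nonneg_left hEm hκ]
  refine ⟨mul_nonneg hκ hρ.le, h2, ?_⟩
  -- reduces to β² ρ² ≤ 2 κ² ρ D
  have e : κ ^ 2 * (S ^ 2 * ρ ^ 2) = κ ^ 2 * (2 * ρ * E - m ^ 2) := by rw [hS2']
  nlinarith [mul_le_mul_of_nonneg_right hβ2 (sq_nonneg ρ), e]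

lemma scale (c x1 x2 x3 : ℝ) (hc : 0 < c) (h1 : 0 < x1) (h3 : x2 ^ 2 < 2 * x1 * x3) :
    0 < c * x1 ∧ (c * x2) ^ 2 < 2 * (c * x1) * (c * x3) :=
  ⟨mul_pos hc h1, by nlinarith [mul_lt_mul_of_pos_left h3 (mul_pos hc hc)]⟩

lemma final_form (x1 x2 x3 : ℝ) (h1 : 0 < x1) (hq : x2 ^ 2 < 2 * x1 * x3) :
    0 < x3 - x2 ^ 2 / (2 * x1) := by
  rw [sub_pos, div_lt_iff₀ (by positivity)]
  nlinarith


noncomputable section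

/-- A 1D state `U = (ρ, m, E)`. -/
abbrev St : Type := ℝ × ℝ × ℝ

/-- The admissible set `G = {(ρ, m, E) : ρ > 0, E − m²/(2ρ) > 0}`. -/
def admG : Set St := {U | 0 < U.1 ∧ 0 < U.2.2 - U.2.1 ^ 2 / (2 * U.1)}

/-- The velocity `u = m/ρ`. -/
def vel (U : St) : ℝ := U.2.1 / U.1

/-- The pressure `p = (γ−1)(E − m²/(2ρ))`. -/
def press (γ : ℝ) (U : St) : ℝ := (γ - 1) * (U.2.2 - U.2.1 ^ 2 / (2 * U.1))

/-- The specific internal energy `e = (E − m²/(2ρ))/ρ`. -/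
def specE (U : St) : ℝ := (U.2.2 - U.2.1 ^ 2 / (2 * U.1)) / U.1

/-- The Euler flux `F(U) = (ρu, ρu² + p, (E+p)u)`. -/
def eulerF (γ : ℝ) (U : St) : St :=
  (U.1 * vel U, U.1 * vel U ^ 2 + press γ U, (U.2.2 + press γ U) * vel U)

/-- `α_max(U) = |u| + √(γp/ρ)`. -/
def alphaMax (γ : ℝ) (U : St) : ℝ := |vel U| + Real.sqrt (γ * press γ U / U.1)

end

set_option maxHeartbeats 1000000 in
/-- Theorem B.1: positivity of the first-order well-balanced DG
scheme with the modified Lax–Friedrichs flux (isothermal case). -/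
theorem first_order_WB_LF_positivity (γ : ℝ) (hγ : 1 < γ)
    (Ujm Uj Ujp : St) (hUjm : Ujm ∈ admG) (hUj : Uj ∈ admG) (hUjp : Ujp ∈ admG)
    (ρejm ρej ρejp : ℝ) (hρejm : 0 < ρejm) (hρej : 0 < ρej) (hρejp : 0 < ρejp)
    (ρmaxl ρmaxr : ℝ) (hρmaxl : max ρejm ρej ≤ ρmaxl) (hρmaxr : max ρej ρejp ≤ ρmaxr)
    (pstl pstr : ℝ)
    (Δt h : ℝ) (hΔt : 0 < Δt) (hh : 0 < h)
    (hcfl :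
      ((max (alphaMax γ Ujm) (alphaMax γ Uj) * ρmaxl
          + max (alphaMax γ Uj) (alphaMax γ Ujp) * ρmaxr) / (2 * ρej)
        + |pstr - pstl| / (ρej * Real.sqrt (2 * specE Uj))) * Δt ≤ h) :
    Uj - (Δt / h) •
        ((1 / 2 : ℝ) • (eulerF γ Uj + eulerF γ Ujp
            - (max (alphaMax γ Uj) (alphaMax γ Ujp) * ρmaxr) •
                (ρejp⁻¹ • Ujp - ρej⁻¹ • Uj))
          - (1 / 2 : ℝ) • (eulerF γ Ujm + eulerF γ Uj
            - (max (alphaMax γ Ujm) (alphaMax γ Uj) * ρmaxl) •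
                (ρej⁻¹ • Uj - ρejm⁻¹ • Ujm)))
      + Δt • (((pstr - pstl) / (h * ρej)) • (((0 : ℝ), Uj.1, Uj.2.1) : St)) ∈ admG := by
  obtain ⟨ρ1, m1, E1⟩ := Ujm
  obtain ⟨ρ2, m2, E2⟩ := Uj
  obtain ⟨ρ3, m3, E3⟩ := Ujp
  have hρ1 : 0 < ρ1 := hUjm.1
  have hρ2 : 0 < ρ2 := hUj.1
  have hρ3 : 0 < ρ3 := hUjp.1
  obtain ⟨u1, rfl⟩ : ∃ u, m1 = ρ1 * u := ⟨m1 / ρ1, by rw [mul_comm, div_mul_cancel₀ _ hρ1.ne']⟩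
  obtain ⟨u2, rfl⟩ : ∃ u, m2 = ρ2 * u := ⟨m2 / ρ2, by rw [mul_comm, div_mul_cancel₀ _ hρ2.ne']⟩
  obtain ⟨u3, rfl⟩ : ∃ u, m3 = ρ3 * u := ⟨m3 / ρ3, by rw [mul_comm, div_mul_cancel₀ _ hρ3.ne']⟩
  obtain ⟨D1, hD1, rfl⟩ : ∃ D, 0 < D ∧ E1 = D + ρ1 * u1 ^ 2 / 2 :=
    ⟨E1 - (ρ1 * u1) ^ 2 / (2 * ρ1), hUjm.2, by field_simp [hρ1.ne']; ring⟩
  obtain ⟨D2, hD2, rfl⟩ : ∃ D, 0 < D ∧ E2 = D + ρ2 * u2 ^ 2 / 2 :=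
    ⟨E2 - (ρ2 * u2) ^ 2 / (2 * ρ2), hUj.2, by field_simp [hρ2.ne']; ring⟩
  obtain ⟨D3, hD3, rfl⟩ : ∃ D, 0 < D ∧ E3 = D + ρ3 * u3 ^ 2 / 2 :=
    ⟨E3 - (ρ3 * u3) ^ 2 / (2 * ρ3), hUjp.2, by field_simp [hρ3.ne']; ring⟩
  set αl := max (alphaMax γ (ρ1, ρ1 * u1, D1 + ρ1 * u1 ^ 2 / 2))
      (alphaMax γ (ρ2, ρ2 * u2, D2 + ρ2 * u2 ^ 2 / 2)) with hαl
  set αr := max (alphaMax γ (ρ2, ρ2 * u2, D2 + ρ2 * u2 ^ 2 / 2))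
      (alphaMax γ (ρ3, ρ3 * u3, D3 + ρ3 * u3 ^ 2 / 2)) with hαr
  simp only [admG, Set.mem_setOf_eq, eulerF, vel, press, specE, Prod.smul_mk, Prod.mk_add_mk,
    Prod.mk_sub_mk, smul_eq_mul] at hcfl ⊢
  clear_value αl αr
  -- identities simplifying internal energies
  have ed1 : D1 + ρ1 * u1 ^ 2 / 2 - (ρ1 * u1) ^ 2 / (2 * ρ1) = D1 := by
    field_simp; ring
  have ed2 : D2 + ρ2 * u2 ^ 2 / 2 - (ρ2 * u2) ^ 2 / (2 * ρ2) = D2 := by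
    field_simp; ring
  have ed3 : D3 + ρ3 * u3 ^ 2 / 2 - (ρ3 * u3) ^ 2 / (2 * ρ3) = D3 := by
    field_simp; ring
  have hγ0 : (0:ℝ) < γ - 1 := by linarith
  -- alphaMax expressions
  have hv1 : vel (ρ1, ρ1 * u1, D1 + ρ1 * u1 ^ 2 / 2) = u1 := mul_div_cancel_left₀ u1 hρ1.ne'
  have hv2 : vel (ρ2, ρ2 * u2, D2 + ρ2 * u2 ^ 2 / 2) = u2 := mul_div_cancel_left₀ u2 hρ2.ne'
  have hv3 : vel (ρ3, ρ3 * u3, D3 + ρ3 * u3 ^ 2 / 2) = u3 := mul_div_cancel_left₀ u3 hρ3.ne'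
  have hp1 : press γ (ρ1, ρ1 * u1, D1 + ρ1 * u1 ^ 2 / 2) = (γ - 1) * D1 := by
    simp only [press]; rw [ed1]
  have hp2 : press γ (ρ2, ρ2 * u2, D2 + ρ2 * u2 ^ 2 / 2) = (γ - 1) * D2 := by
    simp only [press]; rw [ed2]
  have hp3 : press γ (ρ3, ρ3 * u3, D3 + ρ3 * u3 ^ 2 / 2) = (γ - 1) * D3 := by
    simp only [press]; rw [ed3]
  have ham1 : alphaMax γ (ρ1, ρ1 * u1, D1 + ρ1 * u1 ^ 2 / 2)
      = |u1| + Real.sqrt (γ * ((γ - 1) * D1) / ρ1) := by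
    simp only [alphaMax, hv1, hp1]
  have ham2 : alphaMax γ (ρ2, ρ2 * u2, D2 + ρ2 * u2 ^ 2 / 2)
      = |u2| + Real.sqrt (γ * ((γ - 1) * D2) / ρ2) := by
    simp only [alphaMax, hv2, hp2]
  have ham3 : alphaMax γ (ρ3, ρ3 * u3, D3 + ρ3 * u3 ^ 2 / 2)
      = |u3| + Real.sqrt (γ * ((γ - 1) * D3) / ρ3) := by
    simp only [alphaMax, hv3, hp3]
  have ham2pos : 0 < alphaMax γ (ρ2, ρ2 * u2, D2 + ρ2 * u2 ^ 2 / 2) := by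
    rw [ham2]
    have : 0 < Real.sqrt (γ * ((γ - 1) * D2) / ρ2) := Real.sqrt_pos.2 (by positivity)
    have := abs_nonneg u2
    linarith
  have hαlpos : 0 < αl := lt_of_lt_of_le ham2pos (by rw [hαl]; exact le_max_right _ _)
  have hαrpos : 0 < αr := lt_of_lt_of_le ham2pos (by rw [hαr]; exact le_max_left _ _)
  have hml : ρejm ≤ ρmaxl := le_trans (le_max_left _ _) hρmaxl
  have hmr : ρejp ≤ ρmaxr := le_trans (le_max_right _ _) hρmaxr
  have hρmaxl0 : 0 < ρmaxl := lt_of_lt_of_le hρejm hml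
  have hρmaxr0 : 0 < ρmaxr := lt_of_lt_of_le hρejp hmr
  -- modified viscosities
  have hαl'ge : |u1| + Real.sqrt (γ * ((γ - 1) * D1) / ρ1) ≤ αl * ρmaxl / ρejm := by
    have h1 : alphaMax γ (ρ1, ρ1 * u1, D1 + ρ1 * u1 ^ 2 / 2) ≤ αl := by
      rw [hαl]; exact le_max_left _ _
    rw [ham1] at h1
    have h2 : αl ≤ αl * ρmaxl / ρejm := by
      rw [le_div_iff₀ hρejm]
      exact mul_le_mul_of_nonneg_left hml hαlpos.le
    linarith
  have hαr'ge : |u3| + Real.sqrt (γ * ((γ - 1) * D3) / ρ3) ≤ αr * ρmaxr / ρejp := by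
    have h1 : alphaMax γ (ρ3, ρ3 * u3, D3 + ρ3 * u3 ^ 2 / 2) ≤ αr := by
      rw [hαr]; exact le_max_right _ _
    rw [ham3] at h1
    have h2 : αr ≤ αr * ρmaxr / ρejp := by
      rw [le_div_iff₀ hρejp]
      exact mul_le_mul_of_nonneg_left hmr hαrpos.le
    linarith
  obtain ⟨hB1, hB3, hBq⟩ := lf_minus γ ρ1 u1 D1 (αl * ρmaxl / ρejm) hγ hρ1 hD1 hαl'ge
  obtain ⟨hA1, hA3, hAq⟩ := lf_plus γ ρ3 u3 D3 (αr * ρmaxr / ρejp) hγ hρ3 hD3 hαr'ge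
  -- the sound-ish speed S for the source piece
  rw [ed2] at hcfl
  set S := Real.sqrt (2 * (D2 / ρ2)) with hS
  have hSpos : 0 < S := Real.sqrt_pos.2 (by positivity)
  have hS2 : S ^ 2 = 2 * (D2 / ρ2) := Real.sq_sqrt (by positivity)
  clear_value S
  -- κ and β
  set κ := 1 - Δt / h * ((αl * ρmaxl + αr * ρmaxr) / (2 * ρej)) with hκd
  set β := Δt * ((pstr - pstl) / (h * ρej)) with hβd
  clear_value κ β
  have hβabs : |β| ≤ κ * S := by
    have hβ' : |β| = Δt * (|pstr - pstl| / (h * ρej)) := by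
      rw [hβd, abs_mul, abs_div, abs_of_pos hΔt, abs_of_pos (mul_pos hh hρej)]
    have key : κ * S - |β|
        = S / h * (h - ((αl * ρmaxl + αr * ρmaxr) / (2 * ρej)
            + |pstr - pstl| / (ρej * S)) * Δt) := by
      rw [hκd, hβ']
      field_simp
      ring
    linarith [mul_nonneg (div_pos hSpos hh).le (sub_nonneg.2 hcfl)]
  have hDE2 : 0 < D2 + ρ2 * u2 ^ 2 / 2 - (ρ2 * u2) ^ 2 / (2 * ρ2) := by rw [ed2]; exact hD2
  have hS2E : S ^ 2 = 2 * ((D2 + ρ2 * u2 ^ 2 / 2 - (ρ2 * u2) ^ 2 / (2 * ρ2)) / ρ2) := by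
    rw [ed2]; exact hS2
  obtain ⟨hC1, hC3, hCq⟩ :=
    src_nn ρ2 (ρ2 * u2) (D2 + ρ2 * u2 ^ 2 / 2) κ β S hρ2 hDE2 hS2E hSpos hβabs
  -- coefficients
  have hcL : 0 < Δt / h * (αl * ρmaxl) / (2 * ρejm) := by positivity
  have hcR : 0 < Δt / h * (αr * ρmaxr) / (2 * ρejp) := by positivity
  obtain ⟨hA1', hAq'⟩ := scale (Δt / h * (αr * ρmaxr) / (2 * ρejp)) _ _ _ hcR hA1 hAq
  obtain ⟨hB1', hBq'⟩ := scale (Δt / h * (αl * ρmaxl) / (2 * ρejm)) _ _ _ hcL hB1 hBq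
  obtain ⟨hT1, hTq⟩ := combine3 _ _ _ _ _ _ _ _ _ hA1' hAq' hB1' hBq' hC1 hC3 hCq
  have e1 : (ρ2 -
            Δt / h *
              (1 / 2 * (ρ2 * (ρ2 * u2 / ρ2) + ρ3 * (ρ3 * u3 / ρ3) - αr * ρmaxr * (ρejp⁻¹ * ρ3 - ρej⁻¹ * ρ2)) -
                1 / 2 * (ρ1 * (ρ1 * u1 / ρ1) + ρ2 * (ρ2 * u2 / ρ2) - αl * ρmaxl * (ρej⁻¹ * ρ2 - ρejm⁻¹ * ρ1))) +
          Δt * ((pstr - pstl) / (h * ρej) * 0)) = Δt / h * (αr * ρmaxr) / (2 * ρejp) * (ρ3 - ρ3 * u3 / (αr * ρmaxr / ρejp)) +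
        Δt / h * (αl * ρmaxl) / (2 * ρejm) * (ρ1 + ρ1 * u1 / (αl * ρmaxl / ρejm)) + κ * ρ2 := by
    simp only [hκd, hβd, ed1, ed2, ed3, mul_div_cancel_left₀ _ hρ1.ne',
      mul_div_cancel_left₀ _ hρ2.ne', mul_div_cancel_left₀ _ hρ3.ne', mul_zero, add_zero]
    field_simp [hρ1.ne', hρ2.ne', hρ3.ne', hρej.ne', hρejm.ne', hρejp.ne', hh.ne',
      hαlpos.ne', hαrpos.ne', hρmaxl0.ne', hρmaxr0.ne']
    ring
  have e2 : (ρ2 * u2 -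
                  Δt / h *
                    (1 / 2 *
                        (ρ2 * (ρ2 * u2 / ρ2) ^ 2 + (γ - 1) * (D2 + ρ2 * u2 ^ 2 / 2 - (ρ2 * u2) ^ 2 / (2 * ρ2)) +
                            (ρ3 * (ρ3 * u3 / ρ3) ^ 2 +
                              (γ - 1) * (D3 + ρ3 * u3 ^ 2 / 2 - (ρ3 * u3) ^ 2 / (2 * ρ3))) -
                          αr * ρmaxr * (ρejp⁻¹ * (ρ3 * u3) - ρej⁻¹ * (ρ2 * u2))) -
                      1 / 2 *
                        (ρ1 * (ρ1 * u1 / ρ1) ^ 2 + (γ - 1) * (D1 + ρ1 * u1 ^ 2 / 2 - (ρ1 * u1) ^ 2 / (2 * ρ1)) +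
                            (ρ2 * (ρ2 * u2 / ρ2) ^ 2 +
                              (γ - 1) * (D2 + ρ2 * u2 ^ 2 / 2 - (ρ2 * u2) ^ 2 / (2 * ρ2))) -
                          αl * ρmaxl * (ρej⁻¹ * (ρ2 * u2) - ρejm⁻¹ * (ρ1 * u1)))) +
                Δt * ((pstr - pstl) / (h * ρej) * ρ2)) = Δt / h * (αr * ρmaxr) / (2 * ρejp) *
          (ρ3 * u3 - (ρ3 * u3 ^ 2 + (γ - 1) * D3) / (αr * ρmaxr / ρejp)) +
        Δt / h * (αl * ρmaxl) / (2 * ρejm) *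
          (ρ1 * u1 + (ρ1 * u1 ^ 2 + (γ - 1) * D1) / (αl * ρmaxl / ρejm)) + (κ * (ρ2 * u2) + β * ρ2) := by
    simp only [hκd, hβd, ed1, ed2, ed3, mul_div_cancel_left₀ _ hρ1.ne',
      mul_div_cancel_left₀ _ hρ2.ne', mul_div_cancel_left₀ _ hρ3.ne', mul_zero, add_zero]
    field_simp [hρ1.ne', hρ2.ne', hρ3.ne', hρej.ne', hρejm.ne', hρejp.ne', hh.ne',
      hαlpos.ne', hαrpos.ne', hρmaxl0.ne', hρmaxr0.ne']
    ring
  have e3 : (D2 + ρ2 * u2 ^ 2 / 2 -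
              Δt / h *
                (1 / 2 *
                    ((D2 + ρ2 * u2 ^ 2 / 2 + (γ - 1) * (D2 + ρ2 * u2 ^ 2 / 2 - (ρ2 * u2) ^ 2 / (2 * ρ2))) *
                          (ρ2 * u2 / ρ2) +
                        (D3 + ρ3 * u3 ^ 2 / 2 + (γ - 1) * (D3 + ρ3 * u3 ^ 2 / 2 - (ρ3 * u3) ^ 2 / (2 * ρ3))) *
                          (ρ3 * u3 / ρ3) -
                      αr * ρmaxr * (ρejp⁻¹ * (D3 + ρ3 * u3 ^ 2 / 2) - ρej⁻¹ * (D2 + ρ2 * u2 ^ 2 / 2))) -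
                  1 / 2 *
                    ((D1 + ρ1 * u1 ^ 2 / 2 + (γ - 1) * (D1 + ρ1 * u1 ^ 2 / 2 - (ρ1 * u1) ^ 2 / (2 * ρ1))) *
                          (ρ1 * u1 / ρ1) +
                        (D2 + ρ2 * u2 ^ 2 / 2 + (γ - 1) * (D2 + ρ2 * u2 ^ 2 / 2 - (ρ2 * u2) ^ 2 / (2 * ρ2))) *
                          (ρ2 * u2 / ρ2) -
                      αl * ρmaxl * (ρej⁻¹ * (D2 + ρ2 * u2 ^ 2 / 2) - ρejm⁻¹ * (D1 + ρ1 * u1 ^ 2 / 2)))) +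
            Δt * ((pstr - pstl) / (h * ρej) * (ρ2 * u2))) = Δt / h * (αr * ρmaxr) / (2 * ρejp) *
          (D3 + ρ3 * u3 ^ 2 / 2 -
            (D3 + ρ3 * u3 ^ 2 / 2 + (γ - 1) * D3) * u3 / (αr * ρmaxr / ρejp)) +
        Δt / h * (αl * ρmaxl) / (2 * ρejm) *
          (D1 + ρ1 * u1 ^ 2 / 2 +
            (D1 + ρ1 * u1 ^ 2 / 2 + (γ - 1) * D1) * u1 / (αl * ρmaxl / ρejm)) +
        (κ * (D2 + ρ2 * u2 ^ 2 / 2) + β * (ρ2 * u2)) := by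
    simp only [hκd, hβd, ed1, ed2, ed3, mul_div_cancel_left₀ _ hρ1.ne',
      mul_div_cancel_left₀ _ hρ2.ne', mul_div_cancel_left₀ _ hρ3.ne', mul_zero, add_zero]
    field_simp [hρ1.ne', hρ2.ne', hρ3.ne', hρej.ne', hρejm.ne', hρejp.ne', hh.ne',
      hαlpos.ne', hαrpos.ne', hρmaxl0.ne', hρmaxr0.ne']
    ring
  refine ⟨?_, ?_⟩
  · rw [e1]; exact hT1
  · rw [e1, e2, e3]
    exact final_form _ _ _ hT1 hTq
end

section
/- Flux part of the weak positivity for the high-order well-balanced DG scheme with the modified Lax–Friedrichs flux (key step in the proof of Theorem B.2): let U⁻_{j−1/2}, U⁺_{j−1/2}, U⁻_{j+1/2}, U⁺_{j+1/2} ∈ G (the exterior/interior traces at the left interface and the interior/exterior traces at the right interface), let ρ^{e,−}_{j−1/2}, ρ^{e,+}_{j−1/2}, ρ^{e,−}_{j+1/2}, ρ^{e,+}_{j+1/2} > 0, let ρ^{e,max}_{j−1/2} ≥ max{ρ^{e,−}_{j−1/2}, ρ^{e,+}_{j−1/2}} and ρ^{e,max}_{j+1/2} ≥ max{ρ^{e,−}_{j+1/2},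 ρ^{e,+}_{j+1/2}}, and set the viscosity parameters α^{LF}_{j−1/2} = max{α_max(U⁻_{j−1/2}), α_max(U⁺_{j−1/2})} and α^{LF}_{j+1/2} = max{α_max(U⁻_{j+1/2}), α_max(U⁺_{j+1/2})}. Define the modified Lax–Friedrichs fluxes F̂_{j+1/2} = ½[F(U⁻_{j+1/2}) + F(U⁺_{j+1/2}) − α^{LF}_{j+1/2} ρ^{e,max}_{j+1/2} (U⁺_{j+1/2}/ρ^{e,+}_{j+1/2} − U⁻_{j+1/2}/ρ^{e,−}_{j+1/2})] and F̂_{j−1/2} = ½[F(U⁻_{j−1/2}) + F(U⁺_{j−1/2}) − α^{LF}_{j−1/2} ρ^{e,max}_{j−1/2} (U⁺_{j−1/2}/ρ^{e,+}_{j−1/2} − U⁻_{j−1/2}/ρ^{e,−}_{j−1/2})], and set α̃^F = max{ρ^{e,max}_{j+1/2}/ρ^{e,−}_{j+1/2}, ρ^{e,max}_{j−1/2}/ρ^{e,+}_{j−1/2}} · max{α_max(U) : U ∈ {U⁻_{j−1/2}, U⁺_{j−1/2}, U⁻_{j+1/2}, U⁺_{j+1/2}}}. Then for any η ∈ (0,1],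 ω̂₁ > 0, h > 0, and Δt > 0 with Δt·α̃^F ≤ η ω̂₁ h, one has η ω̂₁ (U⁺_{j−1/2} + U⁻_{j+1/2}) − (Δt/h)(F̂_{j+1/2} − F̂_{j−1/2}) ∈ G. -/
lemma admG_add {U V : St} (hU : U ∈ admG) (hV : V ∈ admG) : U + V ∈ admG := by
  obtain ⟨ρ1, m1, E1⟩ := U
  obtain ⟨ρ2, m2, E2⟩ := V
  obtain ⟨h1, h2⟩ := hU
  obtain ⟨h3, h4⟩ := hV
  simp only [admG, Set.mem_setOf_eq, Prod.mk_add_mk] at *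
  constructor
  · linarith
  · rw [sub_pos, div_lt_iff₀ (by linarith)] at h2 h4 ⊢
    nlinarith [sq_nonneg (m1 * ρ2 - m2 * ρ1), mul_pos h1 h3,
      mul_lt_mul_of_pos_right h2 (mul_pos h3 (by linarith : (0:ℝ) < ρ1 + ρ2)),
      mul_lt_mul_of_pos_right h4 (mul_pos h1 (by linarith : (0:ℝ) < ρ1 + ρ2))]

lemma admG_smul {c : ℝ} (hc : 0 < c) {U : St} (hU : U ∈ admG) : c • U ∈ admG := by
  obtain ⟨ρ, m, E⟩ := U
  obtain ⟨h1, h2⟩ := hU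
  simp only [admG, Set.mem_setOf_eq, Prod.smul_mk, smul_eq_mul] at *
  constructor
  · positivity
  · rw [sub_pos, div_lt_iff₀ (by positivity)] at h2 ⊢
    nlinarith [mul_lt_mul_of_pos_left h2 (mul_pos hc hc)]

lemma admG_negM {U : St} (hU : U ∈ admG) : ((U.1, -U.2.1, U.2.2) : St) ∈ admG := by
  obtain ⟨h1, h2⟩ := hU
  exact ⟨h1, by simpa using h2⟩

lemma alphaMax_nonneg (γ : ℝ) (U : St) : 0 ≤ alphaMax γ U :=
  add_nonneg (abs_nonneg _) (Real.sqrt_nonneg _)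

lemma key_minus (γ : ℝ) (hγ : 1 < γ) {U : St} (hU : U ∈ admG) {α : ℝ}
    (hα : alphaMax γ U ≤ α) : α • U - eulerF γ U ∈ admG := by
  obtain ⟨ρ, m, E⟩ := U
  obtain ⟨hρ, he⟩ := hU
  simp only [alphaMax, vel, press] at hα
  have hp : 0 < (γ - 1) * (E - m ^ 2 / (2 * ρ)) := by nlinarith
  have hx : 0 < γ * ((γ - 1) * (E - m ^ 2 / (2 * ρ))) / ρ := by positivity
  have hs : 0 < α - m / ρ := by
    have h1 : Real.sqrt (γ * ((γ - 1) * (E - m ^ 2 / (2 * ρ))) / ρ) ≤ α - m / ρ := by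
      have := abs_nonneg (m / ρ); have := le_abs_self (m / ρ); linarith
    linarith [Real.sqrt_pos.mpr hx]
  have hs2 : γ * ((γ - 1) * (E - m ^ 2 / (2 * ρ))) / ρ ≤ (α - m / ρ) ^ 2 := by
    have h1 : Real.sqrt (γ * ((γ - 1) * (E - m ^ 2 / (2 * ρ))) / ρ) ≤ α - m / ρ := by
      have := le_abs_self (m / ρ); linarith
    nlinarith [Real.sq_sqrt hx.le, Real.sqrt_nonneg (γ * ((γ - 1) * (E - m ^ 2 / (2 * ρ))) / ρ)]
  -- polynomial versions
  set r : ℝ := 2 * ρ * E - m ^ 2 with hr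
  have hrpos : 0 < r := by
    rw [sub_pos, div_lt_iff₀ (by positivity)] at he; rw [hr]; nlinarith
  have hA : 0 < α * ρ - m := by
    have : (α - m / ρ) * ρ = α * ρ - m := by field_simp
    nlinarith [mul_pos hs hρ]
  have hs2' : γ * (γ - 1) * r ≤ 2 * (α * ρ - m) ^ 2 := by
    have h2 : γ * ((γ - 1) * (E - m ^ 2 / (2 * ρ))) / ρ * (2 * ρ ^ 2)
        ≤ (α - m / ρ) ^ 2 * (2 * ρ ^ 2) := by
      exact mul_le_mul_of_nonneg_right hs2 (by positivity)
    have e1 : γ * ((γ - 1) * (E - m ^ 2 / (2 * ρ))) / ρ * (2 * ρ ^ 2) = γ * (γ - 1) * r := by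
      rw [hr]; field_simp
    have e2 : (α - m / ρ) ^ 2 * (2 * ρ ^ 2) = 2 * (α * ρ - m) ^ 2 := by
      field_simp
    rw [e1, e2] at h2; exact h2
  constructor
  · show (0:ℝ) < α * ρ - ρ * (m / ρ)
    have : ρ * (m / ρ) = m := by field_simp
    rw [this]; exact hA
  · show (0:ℝ) < α * E - (E + (γ - 1) * (E - m ^ 2 / (2 * ρ))) * (m / ρ)
      - (α * m - (ρ * (m / ρ) ^ 2 + (γ - 1) * (E - m ^ 2 / (2 * ρ)))) ^ 2
        / (2 * (α * ρ - ρ * (m / ρ)))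
    have hm : ρ * (m / ρ) = m := by field_simp
    have key : α * E - (E + (γ - 1) * (E - m ^ 2 / (2 * ρ))) * (m / ρ)
      - (α * m - (ρ * (m / ρ) ^ 2 + (γ - 1) * (E - m ^ 2 / (2 * ρ)))) ^ 2
        / (2 * (α * ρ - ρ * (m / ρ)))
      = (4 * (α * ρ - m) ^ 2 * r - (γ - 1) ^ 2 * r ^ 2) / (8 * ρ ^ 2 * (α * ρ - m)) := by
      rw [hr]; field_simp; ring
    rw [key]
    apply div_pos
    · nlinarith [sq_nonneg r, mul_pos hrpos hrpos]
    · positivity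

lemma key_plus (γ : ℝ) (hγ : 1 < γ) {U : St} (hU : U ∈ admG) {α : ℝ}
    (hα : alphaMax γ U ≤ α) : α • U + eulerF γ U ∈ admG := by
  obtain ⟨ρ, m, E⟩ := U
  obtain ⟨hρ, he⟩ := hU
  simp only [alphaMax, vel, press] at hα
  have hp : 0 < (γ - 1) * (E - m ^ 2 / (2 * ρ)) := by nlinarith
  have hx : 0 < γ * ((γ - 1) * (E - m ^ 2 / (2 * ρ))) / ρ := by positivity
  have hsq : Real.sqrt (γ * ((γ - 1) * (E - m ^ 2 / (2 * ρ))) / ρ) ≤ α + m / ρ := by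
    have := neg_abs_le (m / ρ); linarith
  have hs : 0 < α + m / ρ := lt_of_lt_of_le (Real.sqrt_pos.mpr hx) hsq
  have hs2 : γ * ((γ - 1) * (E - m ^ 2 / (2 * ρ))) / ρ ≤ (α + m / ρ) ^ 2 := by
    nlinarith [Real.sq_sqrt hx.le, Real.sqrt_nonneg (γ * ((γ - 1) * (E - m ^ 2 / (2 * ρ))) / ρ)]
  set r : ℝ := 2 * ρ * E - m ^ 2 with hr
  have hrpos : 0 < r := by
    rw [sub_pos, div_lt_iff₀ (by positivity)] at he; rw [hr]; nlinarith
  have hA : 0 < α * ρ + m := by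
    have : (α + m / ρ) * ρ = α * ρ + m := by field_simp
    nlinarith [mul_pos hs hρ]
  have hs2' : γ * (γ - 1) * r ≤ 2 * (α * ρ + m) ^ 2 := by
    have h2 : γ * ((γ - 1) * (E - m ^ 2 / (2 * ρ))) / ρ * (2 * ρ ^ 2)
        ≤ (α + m / ρ) ^ 2 * (2 * ρ ^ 2) :=
      mul_le_mul_of_nonneg_right hs2 (by positivity)
    have e1 : γ * ((γ - 1) * (E - m ^ 2 / (2 * ρ))) / ρ * (2 * ρ ^ 2) = γ * (γ - 1) * r := by
      rw [hr]; field_simp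
    have e2 : (α + m / ρ) ^ 2 * (2 * ρ ^ 2) = 2 * (α * ρ + m) ^ 2 := by
      field_simp
    rw [e1, e2] at h2; exact h2
  constructor
  · show (0:ℝ) < α * ρ + ρ * (m / ρ)
    have : ρ * (m / ρ) = m := by field_simp
    rw [this]; exact hA
  · show (0:ℝ) < α * E + (E + (γ - 1) * (E - m ^ 2 / (2 * ρ))) * (m / ρ)
      - (α * m + (ρ * (m / ρ) ^ 2 + (γ - 1) * (E - m ^ 2 / (2 * ρ)))) ^ 2
        / (2 * (α * ρ + ρ * (m / ρ)))
    have key : α * E + (E + (γ - 1) * (E - m ^ 2 / (2 * ρ))) * (m / ρ)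
      - (α * m + (ρ * (m / ρ) ^ 2 + (γ - 1) * (E - m ^ 2 / (2 * ρ)))) ^ 2
        / (2 * (α * ρ + ρ * (m / ρ)))
      = (4 * (α * ρ + m) ^ 2 * r - (γ - 1) ^ 2 * r ^ 2) / (8 * ρ ^ 2 * (α * ρ + m)) := by
      rw [hr]; field_simp; ring
    rw [key]
    apply div_pos
    · nlinarith [sq_nonneg r, mul_pos hrpos hrpos]
    · positivity

lemma admG_nonneg_smul_add {c : ℝ} (hc : 0 ≤ c) {U W : St} (hU : U ∈ admG)
    (hW : W ∈ admG) : c • U + W ∈ admG := by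
  rcases hc.lt_or_eq with h | h
  · exact admG_add (admG_smul h hU) hW
  · rw [← h, zero_smul, zero_add]; exact hW


/-- key step of Theorem B.2: flux part of the weak positivity for
the high-order well-balanced DG scheme with the modified Lax–Friedrichs flux. -/
theorem high_order_WB_LF_flux_positivity (γ : ℝ) (hγ : 1 < γ)
    -- interface traces: `Uml, Upl` at the left interface, `Umr, Upr` at the right
    (Uml Upl Umr Upr : St)
    (hUml : Uml ∈ admG) (hUpl : Upl ∈ admG) (hUmr : Umr ∈ admG) (hUpr : Upr ∈ admG)
    -- equilibrium interface traces
    (ρeml ρepl ρemr ρepr : ℝ)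
    (hρeml : 0 < ρeml) (hρepl : 0 < ρepl) (hρemr : 0 < ρemr) (hρepr : 0 < ρepr)
    (ρmaxl ρmaxr : ℝ) (hρmaxl : max ρeml ρepl ≤ ρmaxl) (hρmaxr : max ρemr ρepr ≤ ρmaxr)
    (η ωhat₁ h Δt : ℝ) (hη₀ : 0 < η) (hη₁ : η ≤ 1) (hωhat₁ : 0 < ωhat₁)
    (hh : 0 < h) (hΔt : 0 < Δt)
    (hcfl :
      Δt * (max (ρmaxr / ρemr) (ρmaxl / ρepl) *
          max (max (alphaMax γ Uml) (alphaMax γ Upl))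
            (max (alphaMax γ Umr) (alphaMax γ Upr))) ≤ η * ωhat₁ * h) :
    (η * ωhat₁) • (Upl + Umr) - (Δt / h) •
        ((1 / 2 : ℝ) • (eulerF γ Umr + eulerF γ Upr
            - (max (alphaMax γ Umr) (alphaMax γ Upr) * ρmaxr) •
                (ρepr⁻¹ • Upr - ρemr⁻¹ • Umr))
          - (1 / 2 : ℝ) • (eulerF γ Uml + eulerF γ Upl
            - (max (alphaMax γ Uml) (alphaMax γ Upl) * ρmaxl) •
                (ρepl⁻¹ • Upl - ρeml⁻¹ • Uml))) ∈ admG := by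
  set αl := max (alphaMax γ Uml) (alphaMax γ Upl) with hαl
  set αr := max (alphaMax γ Umr) (alphaMax γ Upr) with hαr
  have hαl0 : 0 ≤ αl := le_trans (alphaMax_nonneg γ Uml) (le_max_left _ _)
  have hαr0 : 0 ≤ αr := le_trans (alphaMax_nonneg γ Umr) (le_max_left _ _)
  have hml : ρeml ≤ ρmaxl := le_trans (le_max_left _ _) hρmaxl
  have hpl : ρepl ≤ ρmaxl := le_trans (le_max_right _ _) hρmaxl
  have hmr : ρemr ≤ ρmaxr := le_trans (le_max_left _ _) hρmaxr
  have hpr : ρepr ≤ ρmaxr := le_trans (le_max_right _ _) hρmaxr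
  -- the four viscosity coefficients
  set βmr := αr * ρmaxr * ρemr⁻¹ with hβmr
  set βpr := αr * ρmaxr * ρepr⁻¹ with hβpr
  set βml := αl * ρmaxl * ρeml⁻¹ with hβml
  set βpl := αl * ρmaxl * ρepl⁻¹ with hβpl
  have hβmr_ge : alphaMax γ Umr ≤ βmr := by
    rw [hβmr]
    calc alphaMax γ Umr ≤ αr := le_max_left _ _
    _ = αr * (ρemr * ρemr⁻¹) := by rw [mul_inv_cancel₀ hρemr.ne', mul_one]
    _ ≤ αr * (ρmaxr * ρemr⁻¹) := by
        apply mul_le_mul_of_nonneg_left _ hαr0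
        exact mul_le_mul_of_nonneg_right hmr (by positivity)
    _ = αr * ρmaxr * ρemr⁻¹ := by ring
  have hβpr_ge : alphaMax γ Upr ≤ βpr := by
    rw [hβpr]
    calc alphaMax γ Upr ≤ αr := le_max_right _ _
    _ = αr * (ρepr * ρepr⁻¹) := by rw [mul_inv_cancel₀ hρepr.ne', mul_one]
    _ ≤ αr * (ρmaxr * ρepr⁻¹) := by
        apply mul_le_mul_of_nonneg_left _ hαr0
        exact mul_le_mul_of_nonneg_right hpr (by positivity)
    _ = αr * ρmaxr * ρepr⁻¹ := by ring
  have hβml_ge : alphaMax γ Uml ≤ βml := by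
    rw [hβml]
    calc alphaMax γ Uml ≤ αl := le_max_left _ _
    _ = αl * (ρeml * ρeml⁻¹) := by rw [mul_inv_cancel₀ hρeml.ne', mul_one]
    _ ≤ αl * (ρmaxl * ρeml⁻¹) := by
        apply mul_le_mul_of_nonneg_left _ hαl0
        exact mul_le_mul_of_nonneg_right hml (by positivity)
    _ = αl * ρmaxl * ρeml⁻¹ := by ring
  have hβpl_ge : alphaMax γ Upl ≤ βpl := by
    rw [hβpl]
    calc alphaMax γ Upl ≤ αl := le_max_right _ _
    _ = αl * (ρepl * ρepl⁻¹) := by rw [mul_inv_cancel₀ hρepl.ne', mul_one]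
    _ ≤ αl * (ρmaxl * ρepl⁻¹) := by
        apply mul_le_mul_of_nonneg_left _ hαl0
        exact mul_le_mul_of_nonneg_right hpl (by positivity)
    _ = αl * ρmaxl * ρepl⁻¹ := by ring
  -- the four admissible building blocks
  have hV1 : βmr • Umr - eulerF γ Umr ∈ admG := key_minus γ hγ hUmr hβmr_ge
  have hV2 : βpr • Upr - eulerF γ Upr ∈ admG := key_minus γ hγ hUpr hβpr_ge
  have hV3 : βml • Uml + eulerF γ Uml ∈ admG := key_plus γ hγ hUml hβml_ge
  have hV4 : βpl • Upl + eulerF γ Upl ∈ admG := key_plus γ hγ hUpl hβpl_ge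
  -- nonnegativity of the leftover coefficients, from the CFL condition
  have hc1 : 0 ≤ η * ωhat₁ - (Δt / h) * βmr := by
    have h1 : βmr ≤ max (ρmaxr / ρemr) (ρmaxl / ρepl) *
        max (max (alphaMax γ Uml) (alphaMax γ Upl)) αr := by
      rw [hβmr]
      have e : αr * ρmaxr * ρemr⁻¹ = (ρmaxr / ρemr) * αr := by
        rw [div_eq_mul_inv]; ring
      rw [e]
      exact mul_le_mul (le_max_left _ _) (le_max_right _ _) hαr0
        (le_trans (div_nonneg (by linarith) hρemr.le) (le_max_left (ρmaxr / ρemr) _))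
    have h2 : Δt * βmr ≤ η * ωhat₁ * h := le_trans
      (mul_le_mul_of_nonneg_left h1 hΔt.le) hcfl
    rw [sub_nonneg, div_mul_eq_mul_div, div_le_iff₀ hh]
    linarith
  have hc2 : 0 ≤ η * ωhat₁ - (Δt / h) * βpl := by
    have h1 : βpl ≤ max (ρmaxr / ρemr) (ρmaxl / ρepl) *
        max (max (alphaMax γ Uml) (alphaMax γ Upl)) αr := by
      rw [hβpl]
      have e : αl * ρmaxl * ρepl⁻¹ = (ρmaxl / ρepl) * αl := by
        rw [div_eq_mul_inv]; ring
      rw [e]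
      exact mul_le_mul (le_max_right _ _) (le_max_left _ _) hαl0
        (le_trans (div_nonneg (by linarith) hρemr.le) (le_max_left (ρmaxr / ρemr) _))
    have h2 : Δt * βpl ≤ η * ωhat₁ * h := le_trans
      (mul_le_mul_of_nonneg_left h1 hΔt.le) hcfl
    rw [sub_nonneg, div_mul_eq_mul_div, div_le_iff₀ hh]
    linarith
  -- the algebraic decomposition
  have key : (η * ωhat₁) • (Upl + Umr) - (Δt / h) •
        ((1 / 2 : ℝ) • (eulerF γ Umr + eulerF γ Upr
            - (αr * ρmaxr) • (ρepr⁻¹ • Upr - ρemr⁻¹ • Umr))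
          - (1 / 2 : ℝ) • (eulerF γ Uml + eulerF γ Upl
            - (αl * ρmaxl) • (ρepl⁻¹ • Upl - ρeml⁻¹ • Uml)))
      = (η * ωhat₁ - (Δt / h) * βmr) • Umr + ((η * ωhat₁ - (Δt / h) * βpl) • Upl
        + (Δt / h / 2) • ((βmr • Umr - eulerF γ Umr) + ((βpr • Upr - eulerF γ Upr)
          + ((βml • Uml + eulerF γ Uml) + (βpl • Upl + eulerF γ Upl))))) := by
    rw [hβmr, hβpr, hβml, hβpl]
    module
  rw [key]
  exact admG_nonneg_smul_add hc1 hUmr (admG_nonneg_smul_add hc2 hUpl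
    (admG_smul (by positivity) (admG_add hV1 (admG_add hV2 (admG_add hV3 hV4)))))
end
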